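/- (Chain-rule total variation bound for approximate conditionals, Proposition 1.) Let X_1, …, X_d be measurable spaces. Let μ_1 and ν_1 be probability measures on X_1, and for each 2 ≤ j ≤ d let κ_j and η_j be Markov kernels from X_1 × ⋯ × X_{j−1} to X_j such that each map x ↦ TV(κ_j(x), η_j(x)) is measurable. Define P_1 = μ_1 and P_j = P_{j−1} ⊗ κ_j for 2 ≤ j ≤ d, and set P = P_d; similarly define Q_1 = ν_1, Q_j = Q_{j−1} ⊗ η_j, and Q = Q_d. Suppose TV(μ_1, ν_1) ≤ ε_1 and, for each 2 ≤ j ≤ d, ∫ TV(κ_j(x), η_j(x)) dP_{j−1}(x) ≤ ε_j. Then TV(P, Q) ≤ ε_1 + ε_2 + ⋯ + ε_d. -/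

import Mathlib

open MeasureTheory ProbabilityTheory
open scoped ENNReal

/-- Total variation distance between two measures:
`TV(P,Q) = sup { |P(A) - Q(A)| : A measurable }`. -/
noncomputable def tvDist {α : Type*} [MeasurableSpace α] (P Q : Measure α) : ℝ :=
  ⨆ A : {s : Set α // MeasurableSet s}, |(P A.1).toReal - (Q A.1).toReal|

section Helpers

variable {α : Type*} [MeasurableSpace α]

lemma tvDist_bddAbove (P Q : Measure α) [IsFiniteMeasure P] [IsFiniteMeasure Q] :
    BddAbove (Set.range fun A : {s : Set α // MeasurableSet s} =>
      |(P A.1).toReal - (Q A.1).toReal|) := by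
  refine ⟨(P Set.univ).toReal + (Q Set.univ).toReal, ?_⟩
  rintro x ⟨A, rfl⟩
  have h1 : (P A.1).toReal ≤ (P Set.univ).toReal :=
    ENNReal.toReal_mono (measure_ne_top _ _) (measure_mono (Set.subset_univ _))
  have h2 : (Q A.1).toReal ≤ (Q Set.univ).toReal :=
    ENNReal.toReal_mono (measure_ne_top _ _) (measure_mono (Set.subset_univ _))
  have h3 : (0:ℝ) ≤ (P A.1).toReal := ENNReal.toReal_nonneg
  have h4 : (0:ℝ) ≤ (Q A.1).toReal := ENNReal.toReal_nonneg
  rw [abs_sub_le_iff]; constructor <;> linarith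

lemma abs_le_tvDist (P Q : Measure α) [IsFiniteMeasure P] [IsFiniteMeasure Q]
    {s : Set α} (hs : MeasurableSet s) :
    |(P s).toReal - (Q s).toReal| ≤ tvDist P Q :=
  le_ciSup (tvDist_bddAbove P Q) ⟨s, hs⟩

lemma tvDist_comm (P Q : Measure α) : tvDist P Q = tvDist Q P := by
  simp only [tvDist, abs_sub_comm]

lemma tvDist_nonneg (P Q : Measure α) [IsFiniteMeasure P] [IsFiniteMeasure Q] :
    0 ≤ tvDist P Q :=
  (abs_nonneg _).trans (abs_le_tvDist P Q MeasurableSet.empty)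

lemma tvDist_le_two (P Q : Measure α) [IsProbabilityMeasure P] [IsProbabilityMeasure Q] :
    tvDist P Q ≤ 2 := by
  refine ciSup_le fun A => ?_
  have h1 : (P A.1).toReal ≤ 1 := by
    simpa using ENNReal.toReal_mono (by simp) (prob_le_one (μ := P) (s := A.1))
  have h2 : (Q A.1).toReal ≤ 1 := by
    simpa using ENNReal.toReal_mono (by simp) (prob_le_one (μ := Q) (s := A.1))
  have h3 : (0:ℝ) ≤ (P A.1).toReal := ENNReal.toReal_nonneg
  have h4 : (0:ℝ) ≤ (Q A.1).toReal := ENNReal.toReal_nonneg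
  rw [abs_sub_le_iff]; constructor <;> linarith

/-- Key lemma A: for `f : α → ℝ≥0∞` measurable with `f ≤ 1`,
`∫⁻ f dP - ∫⁻ f dQ ≤ tvDist P Q` (in real numbers). -/
lemma lintegral_sub_le_tvDist (P Q : Measure α) [IsFiniteMeasure P] [IsFiniteMeasure Q]
    {f : α → ℝ≥0∞} (hf1 : ∀ x, f x ≤ 1) :
    (∫⁻ x, f x ∂P).toReal ≤ (∫⁻ x, f x ∂Q).toReal + tvDist P Q := by
  obtain ⟨s, hs, hges, hless⟩ := MeasureTheory.hahn_decomposition (μ := P) (ν := Q)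
  have hQPs : Q.restrict s ≤ P.restrict s := by
    refine Measure.le_iff.2 fun t ht => ?_
    rw [Measure.restrict_apply ht, Measure.restrict_apply ht]
    exact hges _ (ht.inter hs) Set.inter_subset_right
  have hPQsc : P.restrict sᶜ ≤ Q.restrict sᶜ := by
    refine Measure.le_iff.2 fun t ht => ?_
    rw [Measure.restrict_apply ht, Measure.restrict_apply ht]
    exact hless _ (ht.inter hs.compl) Set.inter_subset_right
  have key1 : ∫⁻ x in sᶜ, f x ∂P ≤ ∫⁻ x in sᶜ, f x ∂Q := lintegral_mono' hPQsc le_rfl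
  have hδ : P.restrict s - Q.restrict s + Q.restrict s = P.restrict s :=
    Measure.sub_add_cancel_of_le hQPs
  have key2 : ∫⁻ x in s, f x ∂P ≤ ∫⁻ x in s, f x ∂Q + (P s - Q s) := by
    conv_lhs => rw [← hδ]
    rw [lintegral_add_measure]
    have hfd : ∫⁻ x, f x ∂(P.restrict s - Q.restrict s) ≤ P s - Q s := by
      calc ∫⁻ x, f x ∂(P.restrict s - Q.restrict s)
          ≤ ∫⁻ _, 1 ∂(P.restrict s - Q.restrict s) := lintegral_mono hf1
        _ = (P.restrict s - Q.restrict s) Set.univ := by simp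
        _ = P.restrict s Set.univ - Q.restrict s Set.univ :=
            Measure.sub_apply MeasurableSet.univ hQPs
        _ = P s - Q s := by simp [Measure.restrict_apply_univ]
    rw [add_comm]
    exact add_le_add le_rfl hfd
  have key3 : ∫⁻ x, f x ∂P ≤ ∫⁻ x, f x ∂Q + (P s - Q s) := by
    calc ∫⁻ x, f x ∂P = ∫⁻ x in s, f x ∂P + ∫⁻ x in sᶜ, f x ∂P :=
          (lintegral_add_compl f hs).symm
      _ ≤ (∫⁻ x in s, f x ∂Q + (P s - Q s)) + ∫⁻ x in sᶜ, f x ∂Q := add_le_add key2 key1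
      _ = (∫⁻ x in s, f x ∂Q + ∫⁻ x in sᶜ, f x ∂Q) + (P s - Q s) := by ring
      _ = ∫⁻ x, f x ∂Q + (P s - Q s) := by rw [lintegral_add_compl f hs]
  have hfinQ : ∫⁻ x, f x ∂Q ≠ ⊤ := by
    refine ne_top_of_le_ne_top ?_ (lintegral_mono hf1)
    simp [lintegral_one, measure_ne_top]
  have hfinsub : P s - Q s ≠ ⊤ := ne_top_of_le_ne_top (measure_ne_top P s) tsub_le_self
  have := ENNReal.toReal_mono (by simp [ENNReal.add_ne_top, hfinQ, hfinsub]) key3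
  rw [ENNReal.toReal_add hfinQ hfinsub] at this
  refine this.trans (add_le_add le_rfl ?_)
  have hQPs' : Q s ≤ P s := hges s hs subset_rfl
  rw [ENNReal.toReal_sub_of_le hQPs' (measure_ne_top P s)]
  exact (le_abs_self _).trans (abs_le_tvDist P Q hs)

lemma abs_lintegral_sub_le_tvDist (P Q : Measure α) [IsFiniteMeasure P] [IsFiniteMeasure Q]
    {f : α → ℝ≥0∞} (hf1 : ∀ x, f x ≤ 1) :
    |(∫⁻ x, f x ∂P).toReal - (∫⁻ x, f x ∂Q).toReal| ≤ tvDist P Q := by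
  rw [abs_sub_le_iff]
  constructor
  · linarith [lintegral_sub_le_tvDist P Q hf1]
  · have := lintegral_sub_le_tvDist Q P hf1
    rw [tvDist_comm Q P] at this
    linarith


lemma tvDist_compProd_le {β : Type*} [MeasurableSpace β]
    (P Q : Measure α) [IsProbabilityMeasure P] [IsProbabilityMeasure Q]
    (κ η : Kernel α β) [IsMarkovKernel κ] [IsMarkovKernel η]
    (hmeas : Measurable fun x => tvDist (κ x) (η x)) :
    tvDist (P ⊗ₘ κ) (Q ⊗ₘ η) ≤ tvDist P Q + ∫ x, tvDist (κ x) (η x) ∂P := by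
  refine ciSup_le fun A => ?_
  obtain ⟨A, hA⟩ := A
  rw [Measure.compProd_apply hA, Measure.compProd_apply hA]
  set f : α → ENNReal := fun x => κ x (Prod.mk x ⁻¹' A) with hfdef
  set g : α → ENNReal := fun x => η x (Prod.mk x ⁻¹' A) with hgdef
  have hfm : Measurable f := Kernel.measurable_kernel_prodMk_left hA
  have hgm : Measurable g := Kernel.measurable_kernel_prodMk_left hA
  have hf1 : ∀ x, f x ≤ 1 := fun x => prob_le_one
  have hg1 : ∀ x, g x ≤ 1 := fun x => prob_le_one
  have hIf : Integrable (fun x => (f x).toReal) P := by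
    refine Integrable.mono' (integrable_const 1) hfm.ennreal_toReal.aestronglyMeasurable
      (Filter.Eventually.of_forall fun x => ?_)
    rw [Real.norm_eq_abs, abs_of_nonneg ENNReal.toReal_nonneg]
    simpa using ENNReal.toReal_mono (by simp) (hf1 x)
  have hIg : Integrable (fun x => (g x).toReal) P := by
    refine Integrable.mono' (integrable_const 1) hgm.ennreal_toReal.aestronglyMeasurable
      (Filter.Eventually.of_forall fun x => ?_)
    rw [Real.norm_eq_abs, abs_of_nonneg ENNReal.toReal_nonneg]
    simpa using ENNReal.toReal_mono (by simp) (hg1 x)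
  have hItv : Integrable (fun x => tvDist (κ x) (η x)) P := by
    refine Integrable.mono' (integrable_const 2) hmeas.aestronglyMeasurable
      (Filter.Eventually.of_forall fun x => ?_)
    rw [Real.norm_eq_abs, abs_of_nonneg (tvDist_nonneg _ _)]
    exact tvDist_le_two _ _
  have h2 : |(∫⁻ x, g x ∂P).toReal - (∫⁻ x, g x ∂Q).toReal| ≤ tvDist P Q :=
    abs_lintegral_sub_le_tvDist P Q hg1
  have hif : (∫⁻ x, f x ∂P).toReal = ∫ x, (f x).toReal ∂P :=
    (integral_toReal hfm.aemeasurable (Filter.Eventually.of_forall fun x =>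
      lt_of_le_of_lt (hf1 x) ENNReal.one_lt_top)).symm
  have hig : (∫⁻ x, g x ∂P).toReal = ∫ x, (g x).toReal ∂P :=
    (integral_toReal hgm.aemeasurable (Filter.Eventually.of_forall fun x =>
      lt_of_le_of_lt (hg1 x) ENNReal.one_lt_top)).symm
  have h1 : |(∫⁻ x, f x ∂P).toReal - (∫⁻ x, g x ∂P).toReal|
      ≤ ∫ x, tvDist (κ x) (η x) ∂P := by
    rw [hif, hig, ← integral_sub hIf hIg]
    calc |∫ x, ((f x).toReal - (g x).toReal) ∂P|
        ≤ ∫ x, |(f x).toReal - (g x).toReal| ∂P := by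
          simpa [Real.norm_eq_abs] using
            norm_integral_le_integral_norm (fun x => (f x).toReal - (g x).toReal) (μ := P)
      _ ≤ ∫ x, tvDist (κ x) (η x) ∂P := by
          refine integral_mono (hIf.sub hIg).abs hItv fun x => ?_
          exact abs_le_tvDist (κ x) (η x) (measurable_prodMk_left hA)
  calc |(∫⁻ x, f x ∂P).toReal - (∫⁻ x, g x ∂Q).toReal|
      ≤ |(∫⁻ x, f x ∂P).toReal - (∫⁻ x, g x ∂P).toReal|
        + |(∫⁻ x, g x ∂P).toReal - (∫⁻ x, g x ∂Q).toReal| := abs_sub_le _ _ _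
    _ ≤ tvDist P Q + ∫ x, tvDist (κ x) (η x) ∂P := by linarith

end Helpers

/-- `IterProd X n` is the iterated (left-nested) product `X 0 × X 1 × ⋯ × X n`,
modelling the space of the first `n+1` variables. -/
def IterProd (X : ℕ → Type*) : ℕ → Type _
  | 0 => X 0
  | n + 1 => IterProd X n × X (n + 1)

instance iterProdMeasurableSpace (X : ℕ → Type*) [m : ∀ n, MeasurableSpace (X n)] :
    ∀ n, MeasurableSpace (IterProd X n)
  | 0 => m 0
  | n + 1 => @Prod.instMeasurableSpace _ _ (iterProdMeasurableSpace X n) (m (n + 1))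

/-- Chain-rule TV bound, Proposition 1: with `X 0, …, X (d-1)` the `d`
variables, `μ, ν` the initial laws, `κ n, η n` the Markov kernels giving the conditional
of variable `n+1` given the first `n+1` variables, and `P n, Q n` the induced joint laws
of the first `n+1` variables, if `TV(μ, ν) ≤ ε 0` and the expected conditional TV at each
step `j ≥ 1` is at most `ε j`, then `TV(P, Q) ≤ ε 0 + ⋯ + ε (d-1)` for the full joints. -/
theorem chain_rule_tv_bound (X : ℕ → Type*) [∀ n, MeasurableSpace (X n)]
    (d : ℕ) (hd : 1 ≤ d)
    (μ ν : Measure (X 0)) [IsProbabilityMeasure μ] [IsProbabilityMeasure ν]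
    (κ η : ∀ n, Kernel (IterProd X n) (X (n + 1)))
    [∀ n, IsMarkovKernel (κ n)] [∀ n, IsMarkovKernel (η n)]
    (hmeas : ∀ n, Measurable fun x => tvDist (κ n x) (η n x))
    (P Q : ∀ n, Measure (IterProd X n))
    (hP0 : P 0 = μ) (hPsucc : ∀ n, P (n + 1) = (P n) ⊗ₘ (κ n))
    (hQ0 : Q 0 = ν) (hQsucc : ∀ n, Q (n + 1) = (Q n) ⊗ₘ (η n))
    (ε : ℕ → ℝ)
    (hε0 : tvDist μ ν ≤ ε 0)
    (hεsucc : ∀ n, n + 1 < d → ∫ x, tvDist (κ n x) (η n x) ∂(P n) ≤ ε (n + 1)) :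
    tvDist (P (d - 1)) (Q (d - 1)) ≤ ∑ j ∈ Finset.range d, ε j := by
  have hprob : ∀ n, IsProbabilityMeasure (P n) ∧ IsProbabilityMeasure (Q n) := by
    intro n
    induction n with
    | zero => rw [hP0, hQ0]; exact ⟨‹IsProbabilityMeasure μ›, ‹IsProbabilityMeasure ν›⟩
    | succ n ih =>
      haveI h1 := ih.1
      haveI h2 := ih.2
      rw [hPsucc, hQsucc]
      exact ⟨inferInstanceAs (IsProbabilityMeasure ((P n).compProd (κ n))),
        inferInstanceAs (IsProbabilityMeasure ((Q n).compProd (η n)))⟩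
  have main : ∀ m, (∀ n, n < m → ∫ x, tvDist (κ n x) (η n x) ∂(P n) ≤ ε (n + 1)) →
      tvDist (P m) (Q m) ≤ ∑ j ∈ Finset.range (m + 1), ε j := by
    intro m
    induction m with
    | zero => intro _; rw [Finset.sum_range_one, hP0, hQ0]; exact hε0
    | succ m ih =>
      intro h
      haveI := (hprob m).1; haveI := (hprob m).2
      rw [hPsucc, hQsucc, Finset.sum_range_succ]
      calc tvDist (P m ⊗ₘ κ m) (Q m ⊗ₘ η m)
          ≤ tvDist (P m) (Q m) + ∫ x, tvDist (κ m x) (η m x) ∂(P m) :=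
            tvDist_compProd_le _ _ _ _ (hmeas m)
        _ ≤ (∑ j ∈ Finset.range (m + 1), ε j) + ε (m + 1) :=
            add_le_add (ih fun n hn => h n (hn.trans (Nat.lt_succ_self m)))
              (h m (Nat.lt_succ_self m))
  have hd' : d - 1 + 1 = d := Nat.succ_pred_eq_of_pos hd
  have := main (d - 1) (fun n hn => hεsucc n (by omega))
  rwa [hd'] at this
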